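/- For every v ∈ ℝⁿ, if [v]_{K°} ≠ 0 then there exists d ∈ G such that (1/√n)·‖[v]_{K°}‖ ≤ ⟪v, d⟫. -/

import Mathlib

private lemma norm_sq_eq' (n : ℕ) (x : EuclideanSpace ℝ (Fin n)) :
    ‖x‖^2 = ∑ i, (x i)^2 := by
  rw [EuclideanSpace.norm_eq, Real.sq_sqrt (by positivity)]
  simp [sq_abs]

/-- Proposition 3 (Kolda–Lewis–Torczon): if the projection of v onto K° is nonzero,
  some generator d of K° satisfies (1/√n)‖[v]_{K°}‖ ≤ ⟪v, d⟫. -/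
theorem stmt_3 (n : ℕ) (hn : 1 ≤ n)
    (Ip Im : Set (Fin n)) (hdisj : Disjoint Ip Im)
    (Kpolar : Set (EuclideanSpace ℝ (Fin n)))
    (hKpolar : Kpolar = {w | (∀ i ∈ Ip, w i ≤ 0) ∧ (∀ i ∈ Im, 0 ≤ w i)})
    (G : Set (EuclideanSpace ℝ (Fin n)))
    (hG : G = {d | (∃ i ∈ Ip, d = -(EuclideanSpace.single i (1 : ℝ)))
        ∨ (∃ i ∈ Im, d = EuclideanSpace.single i (1 : ℝ))
        ∨ (∃ i, i ∉ Ip ∧ i ∉ Im ∧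
            (d = EuclideanSpace.single i (1 : ℝ) ∨ d = -(EuclideanSpace.single i (1 : ℝ))))})
    (v p : EuclideanSpace ℝ (Fin n))
    (hpmem : p ∈ Kpolar)
    (hpproj : ∀ q ∈ Kpolar, ‖v - p‖ ≤ ‖v - q‖)
    (hpne : p ≠ 0) :
    ∃ d ∈ G, (1 / Real.sqrt n) * ‖p‖ ≤ (inner ℝ v d : ℝ) := by
  classical
  subst hKpolar hG
  obtain ⟨hp1, hp2⟩ := hpmem
  set q : EuclideanSpace ℝ (Fin n) :=
    WithLp.toLp 2 (fun i => if i ∈ Ip then min (v i) 0 else if i ∈ Im then max (v i) 0 else v i) with hq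
  have hqmem : (∀ i ∈ Ip, q i ≤ 0) ∧ (∀ i ∈ Im, 0 ≤ q i) := by
    constructor
    · intro i hi; simp [hq, hi]
    · intro i hi
      have hi' : i ∉ Ip := fun h => hdisj.ne_of_mem h hi rfl
      simp [hq, hi, hi']
  -- componentwise: q is at least as close to v as p in each coordinate
  have hcomp : ∀ i, (v i - q i)^2 ≤ (v i - p i)^2 := by
    intro i
    by_cases hip : i ∈ Ip
    · have hpi := hp1 i hip
      rcases le_total (v i) 0 with h | h
      · simp [hq, hip, min_eq_left h]; positivity
      · simp only [hq, PiLp.toLp_apply, if_pos hip, min_eq_right h]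
        nlinarith
    · by_cases him : i ∈ Im
      · have hpi := hp2 i him
        rcases le_total 0 (v i) with h | h
        · simp [hq, hip, him, max_eq_left h]; positivity
        · simp only [hq, PiLp.toLp_apply, if_neg hip, if_pos him, max_eq_right h]
          nlinarith
      · simp [hq, hip, him]; positivity
  have hsum : ∑ i, (v i - p i)^2 = ∑ i, (v i - q i)^2 := by
    have hle : ‖v - q‖ ≤ ‖v - p‖ := by
      rw [EuclideanSpace.norm_eq, EuclideanSpace.norm_eq]
      apply Real.sqrt_le_sqrt
      apply Finset.sum_le_sum
      intro i _
      simpa [sq_abs] using hcomp i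
    have hge : ‖v - p‖ ≤ ‖v - q‖ := hpproj q hqmem
    have hnorm : ‖v - p‖ = ‖v - q‖ := le_antisymm hge hle
    have := congrArg (· ^ 2) hnorm
    simpa [norm_sq_eq'] using this
  have hterm : ∀ i, p i = q i := by
    have heach : ∀ i ∈ Finset.univ, (v i - q i)^2 = (v i - p i)^2 :=
      (Finset.sum_eq_sum_iff_of_le (fun i _ => hcomp i)).mp hsum.symm
    intro i
    have h := heach i (Finset.mem_univ i)
    by_cases hip : i ∈ Ip
    · have hpi := hp1 i hip
      rcases le_total (v i) 0 with hv | hv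
      · simp only [hq, PiLp.toLp_apply, if_pos hip, min_eq_left hv] at h ⊢
        nlinarith
      · simp only [hq, PiLp.toLp_apply, if_pos hip, min_eq_right hv] at h ⊢
        nlinarith
    · by_cases him : i ∈ Im
      · have hpi := hp2 i him
        rcases le_total 0 (v i) with hv | hv
        · simp only [hq, PiLp.toLp_apply, if_neg hip, if_pos him, max_eq_left hv] at h ⊢
          nlinarith
        · simp only [hq, PiLp.toLp_apply, if_neg hip, if_pos him, max_eq_right hv] at h ⊢
          nlinarith
      · simp only [hq, PiLp.toLp_apply, if_neg hip, if_neg him] at h ⊢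
        nlinarith
  -- find a big coordinate
  haveI : NeZero n := ⟨by omega⟩
  have hpos : (0:ℝ) < ‖p‖ := norm_pos_iff.mpr hpne
  have hex : ∃ i, ‖p‖^2 / n ≤ (p i)^2 := by
    by_contra hcon
    push_neg at hcon
    have : ∑ i, (p i)^2 < ∑ _i : Fin n, ‖p‖^2 / n :=
      Finset.sum_lt_sum_of_nonempty Finset.univ_nonempty (fun i _ => hcon i)
    rw [Finset.sum_const, Finset.card_univ, Fintype.card_fin, nsmul_eq_mul] at this
    rw [← norm_sq_eq'] at this
    have hn' : (0:ℝ) < n := by exact_mod_cast Nat.pos_of_ne_zero (NeZero.ne n)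
    rw [mul_div_cancel₀ _ (ne_of_gt hn')] at this
    exact lt_irrefl _ this
  obtain ⟨i, hi⟩ := hex
  have hn' : (0:ℝ) < n := by exact_mod_cast Nat.pos_of_ne_zero (NeZero.ne n)
  have hsn : (0:ℝ) < Real.sqrt n := Real.sqrt_pos.mpr hn'
  have hbpos : 0 < 1 / Real.sqrt n * ‖p‖ := by positivity
  have hbound : 1 / Real.sqrt n * ‖p‖ ≤ |p i| := by
    have h1 : (1 / Real.sqrt n * ‖p‖)^2 = ‖p‖^2 / n := by
      rw [mul_pow, div_pow, one_pow, Real.sq_sqrt hn'.le]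
      ring
    nlinarith [abs_nonneg (p i), sq_abs (p i), hbpos]
  have hpine : p i ≠ 0 := by
    intro h; rw [h, abs_zero] at hbound; linarith
  by_cases hip : i ∈ Ip
  · -- p i = min (v i) 0 ≠ 0, so p i = v i < 0
    have hqi : p i = min (v i) 0 := by rw [hterm i]; simp [hq, hip]
    have hvi : v i < 0 := by
      rcases le_total (v i) 0 with hv | hv
      · rcases hv.lt_or_eq with h | h
        · exact h
        · exfalso; apply hpine; rw [hqi, h, min_self]
      · exfalso; apply hpine; rw [hqi, min_eq_right hv]
    have hpv : p i = v i := by rw [hqi, min_eq_left hvi.le]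
    refine ⟨-(EuclideanSpace.single i (1:ℝ)), Or.inl ⟨i, hip, rfl⟩, ?_⟩
    rw [inner_neg_right, EuclideanSpace.inner_single_right]
    simp only [map_one, one_mul, starRingEnd_apply, star_trivial]
    rw [abs_of_neg (hpv ▸ hvi)] at hbound
    linarith [hbound, hpv]
  · by_cases him : i ∈ Im
    · have hqi : p i = max (v i) 0 := by rw [hterm i]; simp [hq, hip, him]
      have hvi : 0 < v i := by
        rcases le_total 0 (v i) with hv | hv
        · rcases hv.lt_or_eq with h | h
          · exact h
          · exfalso; apply hpine; rw [hqi, ← h, max_self]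
        · exfalso; apply hpine; rw [hqi, max_eq_right hv]
      have hpv : p i = v i := by rw [hqi, max_eq_left hvi.le]
      refine ⟨EuclideanSpace.single i (1:ℝ), Or.inr (Or.inl ⟨i, him, rfl⟩), ?_⟩
      rw [EuclideanSpace.inner_single_right]
      simp only [map_one, one_mul, starRingEnd_apply, star_trivial]
      rw [abs_of_pos (hpv ▸ hvi)] at hbound
      linarith [hbound, hpv]
    · have hqi : p i = v i := by rw [hterm i]; simp [hq, hip, him]
      rcases le_or_gt 0 (v i) with hv | hv
      · refine ⟨EuclideanSpace.single i (1:ℝ), Or.inr (Or.inr ⟨i, hip, him, Or.inl rfl⟩), ?_⟩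
        rw [EuclideanSpace.inner_single_right]
        simp only [map_one, one_mul, starRingEnd_apply, star_trivial]
        rw [hqi, abs_of_nonneg hv] at hbound
        linarith
      · refine ⟨-(EuclideanSpace.single i (1:ℝ)), Or.inr (Or.inr ⟨i, hip, him, Or.inr rfl⟩), ?_⟩
        rw [inner_neg_right, EuclideanSpace.inner_single_right]
        simp only [map_one, one_mul, starRingEnd_apply, star_trivial]
        rw [hqi, abs_of_neg hv] at hbound
        linarith
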